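/- Fix β > 0. The sequence ξ_β tends to 0 as x → ∞, and consequently ∑_{x=0}^∞ (ξ_β(x) − ξ_β(x+1)) = 1; hence π_β^P(x) := ξ_β(x) − ξ_β(x+1) defines a probability distribution on ℕ. -/
import Mathlib


/-- The tail sequence of the invariant distribution `π_β^P` of the mean-field limit
of the Power of Choice policy: `ξ_β(0) = 1` and
`ξ_β(x+1) = (−1 + √(1 + 4β²ξ_β(x)²))/(2β)`. -/
noncomputable def xi (β : ℝ) : ℕ → ℝ
  | 0 => 1
  | x + 1 => (-1 + Real.sqrt (1 + 4 * β ^ 2 * (xi β x) ^ 2)) / (2 * β)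


/-- `ξ_β(x) → 0` as `x → ∞`, and consequently the differences
`π_β^P(x) = ξ_β(x) − ξ_β(x+1)` sum to `1`, so they define a probability
distribution on `ℕ`. -/
lemma xi_bound (β : ℝ) (hβ : 0 < β) (x : ℕ) :
    0 < xi β x ∧ xi β x ≤ (2 * β / (1 + 2 * β)) ^ x := by
  set r := 2 * β / (1 + 2 * β) with hr_def
  have hden : (0:ℝ) < 1 + 2 * β := by linarith
  have hr0 : 0 < r := by positivity
  have hr1 : r < 1 := by rw [hr_def, div_lt_one hden]; linarith
  have hrm : r * (1 + 2 * β) = 2 * β := by rw [hr_def]; field_simp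
  induction x with
  | zero => simp [xi]
  | succ n ih =>
    obtain ⟨h1, h2⟩ := ih
    have hle1 : xi β n ≤ 1 := h2.trans (pow_le_one₀ hr0.le hr1.le)
    set ξ := xi β n with hξ
    have hnn : (0:ℝ) ≤ 1 + 4 * β ^ 2 * ξ ^ 2 := by positivity
    have hs := Real.sq_sqrt hnn
    have hsnn := Real.sqrt_nonneg (1 + 4 * β ^ 2 * ξ ^ 2)
    have hc : 0 < 4 * β ^ 2 * ξ ^ 2 := by positivity
    constructor
    · have h1lt : 1 < Real.sqrt (1 + 4 * β ^ 2 * ξ ^ 2) := by nlinarith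
      show 0 < (-1 + Real.sqrt (1 + 4 * β ^ 2 * ξ ^ 2)) / (2 * β)
      apply div_pos (by linarith) (by positivity)
    · have e1 : 0 ≤ β * (1 - r) * (2 - ξ * (1 + r)) := by
        have h2le : ξ * (1 + r) ≤ 2 := by nlinarith
        have : (0:ℝ) ≤ 1 - r := by linarith
        have : (0:ℝ) ≤ 2 - ξ * (1 + r) := by linarith
        positivity
      have hk : β * ξ ≤ r + β * r ^ 2 * ξ := by nlinarith [e1, hrm]
      have hmul := mul_le_mul_of_nonneg_left hk (show (0:ℝ) ≤ 4 * β * ξ by positivity)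
      have key : Real.sqrt (1 + 4 * β ^ 2 * ξ ^ 2) ≤ 1 + 2 * β * r * ξ := by
        have h2 : (1:ℝ) + 4 * β ^ 2 * ξ ^ 2 ≤ (1 + 2 * β * r * ξ) ^ 2 := by nlinarith [hmul]
        calc Real.sqrt (1 + 4 * β ^ 2 * ξ ^ 2) ≤ Real.sqrt ((1 + 2 * β * r * ξ) ^ 2) :=
              Real.sqrt_le_sqrt h2
          _ = 1 + 2 * β * r * ξ := Real.sqrt_sq (by positivity)
      have hstep : xi β (n+1) ≤ r * ξ := by
        show (-1 + Real.sqrt (1 + 4 * β ^ 2 * ξ ^ 2)) / (2 * β) ≤ r * ξ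
        rw [div_le_iff₀ (by positivity)]
        nlinarith [key]
      calc xi β (n+1) ≤ r * ξ := hstep
        _ ≤ r * r ^ n := by nlinarith
        _ = r ^ (n+1) := by ring

lemma xi_antitone (β : ℝ) (hβ : 0 < β) (x : ℕ) : xi β (x + 1) ≤ xi β x := by
  have h1 := (xi_bound β hβ x).1
  set ξ := xi β x with hξ
  have hnn : (0:ℝ) ≤ 1 + 4 * β ^ 2 * ξ ^ 2 := by positivity
  have key : Real.sqrt (1 + 4 * β ^ 2 * ξ ^ 2) ≤ 1 + 2 * β * ξ := by
    calc Real.sqrt (1 + 4 * β ^ 2 * ξ ^ 2) ≤ Real.sqrt ((1 + 2 * β * ξ) ^ 2) :=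
          Real.sqrt_le_sqrt (by nlinarith [mul_pos hβ h1])
      _ = 1 + 2 * β * ξ := Real.sqrt_sq (by positivity)
  show (-1 + Real.sqrt (1 + 4 * β ^ 2 * ξ ^ 2)) / (2 * β) ≤ ξ
  rw [div_le_iff₀ (by positivity)]
  nlinarith [key]

theorem xi_tendsto_zero_and_prob (β : ℝ) (hβ : 0 < β) :
    Filter.Tendsto (xi β) Filter.atTop (nhds 0) ∧
      HasSum (fun x : ℕ => xi β x - xi β (x + 1)) 1 := by
  set r := 2 * β / (1 + 2 * β) with hr_def
  have hden : (0:ℝ) < 1 + 2 * β := by linarith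
  have hr0 : 0 < r := by positivity
  have hr1 : r < 1 := by rw [hr_def, div_lt_one hden]; linarith
  have hgeo : Filter.Tendsto (fun x : ℕ => r ^ x) Filter.atTop (nhds 0) :=
    tendsto_pow_atTop_nhds_zero_of_lt_one hr0.le hr1
  have htend : Filter.Tendsto (xi β) Filter.atTop (nhds 0) :=
    squeeze_zero (fun x => (xi_bound β hβ x).1.le) (fun x => (xi_bound β hβ x).2) hgeo
  refine ⟨htend, ?_⟩
  rw [hasSum_iff_tendsto_nat_of_nonneg
    (fun x => sub_nonneg.mpr (xi_antitone β hβ x))]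
  have : (fun n : ℕ => ∑ i ∈ Finset.range n, (xi β i - xi β (i + 1)))
      = fun n : ℕ => xi β 0 - xi β n := by
    funext n; exact Finset.sum_range_sub' (xi β) n
  rw [this]
  have : xi β 0 = 1 := rfl
  rw [this]
  simpa using (tendsto_const_nhds.sub htend)
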